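/- The number of decreasing labellings of a binary tree T with n nodes (labellings by 1,...,n in which every node's label exceeds all labels in its subtree) equals n! divided by the product over all nodes v of T of the size h_v of the subtree rooted at v (the hook length formula for binary trees). -/

import Mathlib

/-- Unlabelled binary trees. -/
inductive Tree0 where
  | leaf : Tree0
  | node : Tree0 → Tree0 → Tree0
deriving DecidableEq

namespace Tree0

/-- Number of nodes. -/
def size : Tree0 → ℕ
  | leaf => 0
  | node l r => size l + size r + 1

/-- The product over all nodes `v` of the size `h_v` of the subtree rooted at `v`. -/
def hookProd : Tree0 → ℕ
  | leaf => 1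
  | node l r => (size l + size r + 1) * hookProd l * hookProd r

end Tree0

/-- Labelled binary trees (labels in `ℕ`). -/
inductive BT where
  | leaf : BT
  | node : BT → ℕ → BT → BT
deriving DecidableEq

namespace BT

/-- Underlying unlabelled shape. -/
def shape : BT → Tree0
  | leaf => Tree0.leaf
  | node l _ r => Tree0.node (shape l) (shape r)

/-- Inorder list of labels. -/
def labels : BT → List ℕ
  | leaf => []
  | node l x r => labels l ++ x :: labels r

/-- A decreasing labelling: every node's label strictly exceeds all labels in the
subtrees of its children. -/
def IsDecreasing : BT → Prop
  | leaf => True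
  | node l x r =>
      (∀ y ∈ labels l, y < x) ∧ (∀ y ∈ labels r, y < x) ∧ IsDecreasing l ∧ IsDecreasing r

end BT

namespace BT

lemma labels_length (t : BT) : (labels t).length = (shape t).size := by
  induction t with
  | leaf => rfl
  | node l x r ihl ihr => simp [labels, shape, Tree0.size, ihl, ihr]; omega

/-- All decreasing labellings of shape `T` whose label set is `S`. -/
def allDec : Tree0 → Finset ℕ → Finset BT
  | .leaf, S => if S = ∅ then {BT.leaf} else ∅
  | .node l r, S =>
    if h : S.Nonempty then
      ((S.erase (S.max' h)).powersetCard l.size).biUnion (fun A =>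
        ((allDec l A) ×ˢ (allDec r (S.erase (S.max' h) \ A))).image
          (fun p => BT.node p.1 (S.max' h) p.2))
    else ∅

lemma mem_allDec : ∀ (T : Tree0) (S : Finset ℕ) (t : BT),
    t ∈ allDec T S ↔
      shape t = T ∧ IsDecreasing t ∧ (labels t).Nodup ∧ (labels t).toFinset = S := by
  intro T
  induction T with
  | leaf =>
    intro S t
    constructor
    · intro ht
      simp only [allDec] at ht
      split at ht
      · next hS =>
        simp only [Finset.mem_singleton] at ht
        subst ht; subst hS
        exact ⟨rfl, trivial, List.nodup_nil, rfl⟩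
      · exact absurd ht (Finset.notMem_empty t)
    · rintro ⟨hsh, _, _, htf⟩
      cases t with
      | leaf =>
        simp only [labels, List.toFinset_nil] at htf
        simp [allDec, ← htf]
      | node l x r => simp [shape] at hsh
  | node l r ihl ihr =>
    intro S t
    constructor
    · intro ht
      simp only [allDec] at ht
      split at ht
      · next hS =>
        set m := S.max' hS with hm
        simp only [Finset.mem_biUnion, Finset.mem_image, Finset.mem_product,
          Finset.mem_powersetCard] at ht
        obtain ⟨A, ⟨hAsub, hAcard⟩, ⟨p, ⟨hp1, hp2⟩, hpt⟩⟩ := ht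
        obtain ⟨hsh1, hdec1, hnd1, htf1⟩ := (ihl A p.1).mp hp1
        obtain ⟨hsh2, hdec2, hnd2, htf2⟩ := (ihr (S.erase m \ A) p.2).mp hp2
        subst hpt
        have hlt1 : ∀ y ∈ labels p.1, y < m := by
          intro y hy
          have hyA : y ∈ A := by rw [← htf1]; exact List.mem_toFinset.mpr hy
          have := hAsub hyA
          have h1 := Finset.mem_of_mem_erase this
          have h2 := Finset.ne_of_mem_erase this
          exact lt_of_le_of_ne (S.le_max' y h1) h2
        have hlt2 : ∀ y ∈ labels p.2, y < m := by
          intro y hy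
          have hyB : y ∈ S.erase m \ A := by rw [← htf2]; exact List.mem_toFinset.mpr hy
          have := Finset.mem_sdiff.mp hyB
          have h1 := Finset.mem_of_mem_erase this.1
          have h2 := Finset.ne_of_mem_erase this.1
          exact lt_of_le_of_ne (S.le_max' y h1) h2
        refine ⟨by simp [shape, hsh1, hsh2], ⟨hlt1, hlt2, hdec1, hdec2⟩, ?_, ?_⟩
        · simp only [labels, List.nodup_append, List.nodup_cons]
          refine ⟨hnd1, ⟨?_, hnd2⟩, ?_⟩
          · intro hmem
            exact absurd rfl (ne_of_lt (hlt2 m hmem)).symm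
          · intro y hy1 b hy2 hyb
            subst hyb
            simp only [List.mem_cons] at hy2
            rcases hy2 with rfl | hy2
            · exact absurd rfl (ne_of_lt (hlt1 _ hy1)).symm
            · have hyA : y ∈ A := by rw [← htf1]; exact List.mem_toFinset.mpr hy1
              have hyB : y ∈ S.erase m \ A := by rw [← htf2]; exact List.mem_toFinset.mpr hy2
              exact absurd hyA (Finset.mem_sdiff.mp hyB).2
        · simp only [labels, List.toFinset_append, List.toFinset_cons, htf1, htf2]
          ext y
          simp only [Finset.mem_union, Finset.mem_insert, Finset.mem_sdiff, Finset.mem_erase]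
          constructor
          · rintro (hyA | rfl | ⟨⟨_, hyS⟩, _⟩)
            · exact Finset.mem_of_mem_erase (hAsub hyA)
            · exact S.max'_mem hS
            · exact hyS
          · intro hyS
            by_cases hym : y = m
            · exact Or.inr (Or.inl hym)
            · by_cases hyA : y ∈ A
              · exact Or.inl hyA
              · exact Or.inr (Or.inr ⟨⟨hym, hyS⟩, hyA⟩)
      · next hS =>
        exact absurd ht (Finset.notMem_empty t)
    · rintro ⟨hsh, hdec, hnd, htf⟩
      cases t with
      | leaf => simp [shape] at hsh
      | node t1 x t2 =>
        simp only [shape, Tree0.node.injEq] at hsh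
        obtain ⟨hsh1, hsh2⟩ := hsh
        obtain ⟨hlt1, hlt2, hdec1, hdec2⟩ := hdec
        simp only [labels, List.nodup_append, List.nodup_cons] at hnd
        obtain ⟨hnd1, ⟨hx2, hnd2⟩, hdisj⟩ := hnd
        have hxS : x ∈ S := by
          rw [← htf]; simp [labels]
        have hS : S.Nonempty := ⟨x, hxS⟩
        set m := S.max' hS with hm
        have hmx : m = x := by
          have h1 : x ≤ m := S.le_max' x hxS
          have h2 : m ∈ S := S.max'_mem hS
          rw [← htf] at h2
          simp only [labels, List.mem_toFinset, List.mem_append, List.mem_cons] at h2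
          rcases h2 with h2 | rfl | h2
          · exact absurd h1 (not_le_of_gt (hlt1 m h2))
          · rfl
          · exact absurd h1 (not_le_of_gt (hlt2 m h2))
        have hsub1 : (labels t1).toFinset ⊆ S.erase m := by
          intro y hy
          rw [List.mem_toFinset] at hy
          refine Finset.mem_erase.mpr ⟨?_, ?_⟩
          · rw [hmx]; exact ne_of_lt (hlt1 y hy)
          · rw [← htf]; simp [labels, hy]
        have hcard1 : (labels t1).toFinset.card = l.size := by
          rw [List.toFinset_card_of_nodup hnd1, labels_length, hsh1]
        have hsdiff : S.erase m \ (labels t1).toFinset = (labels t2).toFinset := by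
          ext y
          simp only [Finset.mem_sdiff, Finset.mem_erase, List.mem_toFinset]
          constructor
          · rintro ⟨⟨hym, hyS⟩, hy1⟩
            rw [← htf] at hyS
            simp only [labels, List.mem_toFinset, List.mem_append, List.mem_cons] at hyS
            rcases hyS with h | rfl | h
            · exact absurd h hy1
            · exact absurd hmx.symm hym
            · exact h
          · intro hy2
            refine ⟨⟨?_, ?_⟩, ?_⟩
            · rw [hmx]; exact ne_of_lt (hlt2 y hy2)
            · rw [← htf]; simp [labels, hy2]
            · intro hy1
              exact hdisj y hy1 y (List.mem_cons_of_mem x hy2) rfl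
        simp only [allDec, dif_pos hS]
        simp only [Finset.mem_biUnion, Finset.mem_image, Finset.mem_product,
          Finset.mem_powersetCard]
        refine ⟨(labels t1).toFinset, ⟨hsub1, hcard1⟩, ⟨(t1, t2), ⟨?_, ?_⟩, ?_⟩⟩
        · exact (ihl _ t1).mpr ⟨hsh1, hdec1, hnd1, rfl⟩
        · rw [hsdiff]
          exact (ihr _ t2).mpr ⟨hsh2, hdec2, hnd2, rfl⟩
        · simp [← hmx]; exact hm.symm

lemma card_allDec : ∀ (T : Tree0) (S : Finset ℕ), S.card = T.size →
    (allDec T S).card * T.hookProd = (T.size).factorial := by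
  intro T
  induction T with
  | leaf =>
    intro S hS
    have : S = ∅ := Finset.card_eq_zero.mp hS
    subst this
    simp [allDec, Tree0.hookProd, Tree0.size]
  | node l r ihl ihr =>
    intro S hS
    have hS' : S.Nonempty := Finset.card_pos.mp (by rw [hS]; simp [Tree0.size])
    set m := S.max' hS' with hm
    set E := S.erase m with hE
    have hEcard : E.card = l.size + r.size := by
      rw [hE, Finset.card_erase_of_mem (S.max'_mem hS'), hS]
      simp [Tree0.size]
    have hinj : Function.Injective (fun p : BT × BT => BT.node p.1 m p.2) := by
      intro p q hpq
      simp only [BT.node.injEq] at hpq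
      exact Prod.ext hpq.1 hpq.2.2
    have hdisjoint : ∀ A ∈ E.powersetCard l.size, ∀ B ∈ E.powersetCard l.size, A ≠ B →
        Disjoint ((allDec l A ×ˢ allDec r (E \ A)).image (fun p => BT.node p.1 m p.2))
                 ((allDec l B ×ˢ allDec r (E \ B)).image (fun p => BT.node p.1 m p.2)) := by
      intro A _ B _ hAB
      rw [Finset.disjoint_left]
      rintro t ht ht'
      simp only [Finset.mem_image, Finset.mem_product] at ht ht'
      obtain ⟨p, ⟨hp1, _⟩, hpt⟩ := ht
      obtain ⟨q, ⟨hq1, _⟩, hqt⟩ := ht'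
      have : p.1 = q.1 := by
        rw [← hqt] at hpt
        simpa using congrArg (fun s => match s with | BT.node a _ _ => a | _ => BT.leaf) hpt
      have hA : (labels p.1).toFinset = A := ((mem_allDec l A p.1).mp hp1).2.2.2
      have hB : (labels q.1).toFinset = B := ((mem_allDec l B q.1).mp hq1).2.2.2
      exact hAB (by rw [← hA, this, hB])
    have hcard : (allDec (Tree0.node l r) S).card =
        ∑ A ∈ E.powersetCard l.size, (allDec l A).card * (allDec r (E \ A)).card := by
      simp only [allDec, dif_pos hS', ← hm, ← hE]
      rw [Finset.card_biUnion hdisjoint]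
      refine Finset.sum_congr rfl fun A _ => ?_
      rw [Finset.card_image_of_injective _ hinj, Finset.card_product]
    rw [hcard]
    simp only [Tree0.hookProd, Tree0.size]
    have key : ∀ A ∈ E.powersetCard l.size,
        (allDec l A).card * (allDec r (E \ A)).card * (l.hookProd * r.hookProd)
          = (l.size).factorial * (r.size).factorial := by
      intro A hA
      rw [Finset.mem_powersetCard] at hA
      have h1 := ihl A hA.2
      have h2 : (E \ A).card = r.size := by
        rw [Finset.card_sdiff_of_subset hA.1, hEcard, hA.2]; omega
      have h2' := ihr (E \ A) h2
      calc (allDec l A).card * (allDec r (E \ A)).card * (l.hookProd * r.hookProd)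
          = ((allDec l A).card * l.hookProd) * ((allDec r (E \ A)).card * r.hookProd) := by ring
        _ = (l.size).factorial * (r.size).factorial := by rw [h1, h2']
    calc (∑ A ∈ E.powersetCard l.size, (allDec l A).card * (allDec r (E \ A)).card) *
          ((l.size + r.size + 1) * l.hookProd * r.hookProd)
        = (l.size + r.size + 1) * ∑ A ∈ E.powersetCard l.size,
            ((allDec l A).card * (allDec r (E \ A)).card * (l.hookProd * r.hookProd)) := by
          rw [Finset.sum_mul]; rw [Finset.mul_sum]; ring_nf
          refine Finset.sum_congr rfl fun A _ => by ring
      _ = (l.size + r.size + 1) * ∑ A ∈ E.powersetCard l.size,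
            (l.size).factorial * (r.size).factorial := by
          rw [Finset.sum_congr rfl key]
      _ = (l.size + r.size + 1) * ((l.size + r.size).choose l.size *
            ((l.size).factorial * (r.size).factorial)) := by
          rw [Finset.sum_const, Finset.card_powersetCard, hEcard, smul_eq_mul]
      _ = (l.size + r.size + 1) * ((l.size + r.size).factorial) := by
          congr 1
          have := Nat.choose_mul_factorial_mul_factorial
            (Nat.le_add_right l.size r.size) (n := l.size + r.size)
          rw [← this]
          have : l.size + r.size - l.size = r.size := by omega
          rw [this]; ring
      _ = (l.size + r.size + 1).factorial := (Nat.factorial_succ _).symm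

end BT

/-- hook length formula for binary trees. The number of decreasing
labellings of a binary tree `T` with `n` nodes by `1,…,n` equals `n!` divided by the
product of the subtree sizes `h_v` over all nodes `v`. -/
theorem hook_length_formula (T : Tree0) (n : ℕ) (hn : T.size = n) :
    (Set.ncard {t : BT | BT.shape t = T ∧ BT.IsDecreasing t ∧
        (BT.labels t).Perm (List.range' 1 n)}) * Tree0.hookProd T
      = Nat.factorial n := by
  have hrange_tf : (List.range' 1 n).toFinset = Finset.Icc 1 n := by
    ext y
    simp only [List.mem_toFinset, List.mem_range'_1, Finset.mem_Icc]
    omega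
  have hrange_nd : (List.range' 1 n).Nodup := List.nodup_range' (s := 1) (n := n)
  have hIcc : (Finset.Icc 1 n).card = T.size := by
    rw [Nat.card_Icc]; omega
  have hset : {t : BT | BT.shape t = T ∧ BT.IsDecreasing t ∧
      (BT.labels t).Perm (List.range' 1 n)} = ↑(BT.allDec T (Finset.Icc 1 n)) := by
    ext t
    simp only [Set.mem_setOf_eq, Finset.coe_sort_coe, Finset.mem_coe,
      BT.mem_allDec]
    constructor
    · rintro ⟨h1, h2, h3⟩
      refine ⟨h1, h2, h3.nodup_iff.mpr hrange_nd, ?_⟩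
      rw [← hrange_tf]
      exact List.toFinset_eq_of_perm _ _ h3
    · rintro ⟨h1, h2, h3, h4⟩
      refine ⟨h1, h2, ?_⟩
      apply List.perm_of_nodup_nodup_toFinset_eq h3 hrange_nd
      rw [h4, hrange_tf]
    
  rw [hset, Set.ncard_coe_finset]
  exact (BT.card_allDec T _ hIcc).trans (by rw [hn])
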